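/- arXiv:1305.7117 — 5 statements merged into one kernel-verified Lean document; each statement's English description precedes it below -/
import Mathlib

section
/- Fix i ∈ {1,…,N}. Suppose the i-th closed-loop system satisfies x_i'(t) = A_c x_i(t) − Σ_{j ∈ N_i} α_{ij}(t)·(B (F x_{ij}(t))) for all t ≥ 0, and the edge-dependent gains α_{ij} : [0,∞) → ℝ are differentiable and evolve by the σ-modified adaptation law α_{ij}'(t) = ⟨x_i(t), B (F x_{ij}(t))⟩ − σ α_{ij}(t) for each j ∈ N_i, where σ > 0. Then the Lyapunov functional V_i(t) := ‖x_i(t)‖² + Σ_{j ∈ N_i} α_{ij}(t)² is differentiable and satisfies V_i'(t) = 2⟨A_c x_i(t), x_i(t)⟩ − 2σ Σ_{j ∈ N_i} α_{ij}(t)² ≤ −κ‖x_i(t)‖² − 2σ Σ_{j ∈ N_i} α_{ij}(t)² for all t ≥ 0. -/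
open scoped RealInnerProductSpace

/-- σ-modified adaptation law. The Lyapunov functional
`V_i(t) = ‖x_i(t)‖² + Σ_{j ∈ N_i} α_{ij}(t)²` is differentiable with
derivative `2⟨A_c x_i, x_i⟩ − 2σ Σ α_{ij}²`, which is bounded above by
`−κ‖x_i‖² − 2σ Σ α_{ij}²`. -/
theorem stmt0
    {H U : Type*} [NormedAddCommGroup H] [InnerProductSpace ℝ H] [CompleteSpace H]
    [NormedAddCommGroup U] [InnerProductSpace ℝ U] [CompleteSpace U]
    (Ac : H →L[ℝ] H) (B : U →L[ℝ] H) (F : H →L[ℝ] U)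
    (κ σ : ℝ) (hκ : 0 < κ) (hσ : 0 < σ)
    (hdiss : ∀ φ : H, 2 * ⟪Ac φ, φ⟫ ≤ -κ * ‖φ‖ ^ 2)
    (N : ℕ) (x : Fin N → ℝ → H) (i : Fin N) (Ni : Finset (Fin N))
    (α : Fin N → ℝ → ℝ)
    (hx : ∀ t : ℝ, 0 ≤ t →
      HasDerivAt (x i)
        (Ac (x i t) - ∑ j ∈ Ni, α j t • B (F (x i t - x j t))) t)
    (hα : ∀ j ∈ Ni, ∀ t : ℝ, 0 ≤ t →
      HasDerivAt (α j) (⟪x i t, B (F (x i t - x j t))⟫ - σ * α j t) t) :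
    ∀ t : ℝ, 0 ≤ t →
      HasDerivAt (fun s => ‖x i s‖ ^ 2 + ∑ j ∈ Ni, (α j s) ^ 2)
        (2 * ⟪Ac (x i t), x i t⟫ - 2 * σ * ∑ j ∈ Ni, (α j t) ^ 2) t ∧
      2 * ⟪Ac (x i t), x i t⟫ - 2 * σ * ∑ j ∈ Ni, (α j t) ^ 2 ≤
        -κ * ‖x i t‖ ^ 2 - 2 * σ * ∑ j ∈ Ni, (α j t) ^ 2 := by
  intro t ht
  set v : H := Ac (x i t) - ∑ j ∈ Ni, α j t • B (F (x i t - x j t)) with hv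
  have hnorm : HasDerivAt (fun s => ‖x i s‖ ^ 2)
      (⟪x i t, v⟫ + ⟪v, x i t⟫) t := by
    have h := (hx t ht).inner ℝ (hx t ht)
    simpa only [real_inner_self_eq_norm_sq] using h
  have hsum : HasDerivAt (fun s => ∑ j ∈ Ni, (α j s) ^ 2)
      (∑ j ∈ Ni, (2 * α j t * (⟪x i t, B (F (x i t - x j t))⟫ - σ * α j t))) t := by
    refine HasDerivAt.fun_sum fun j hj => ?_
    have := ((hα j hj t ht).fun_pow 2)
    simpa [mul_comm, mul_assoc, mul_left_comm] using this
  have key : (⟪x i t, v⟫ + ⟪v, x i t⟫) +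
      (∑ j ∈ Ni, (2 * α j t * (⟪x i t, B (F (x i t - x j t))⟫ - σ * α j t)))
      = 2 * ⟪Ac (x i t), x i t⟫ - 2 * σ * ∑ j ∈ Ni, (α j t) ^ 2 := by
    have h1 : ⟪x i t, v⟫ = ⟪v, x i t⟫ := real_inner_comm _ _
    have hvx : ⟪v, x i t⟫ = ⟪Ac (x i t), x i t⟫
        - ∑ j ∈ Ni, α j t * ⟪x i t, B (F (x i t - x j t))⟫ := by
      rw [hv, inner_sub_left, sum_inner]
      congr 1
      exact Finset.sum_congr rfl fun j _ => by
        rw [real_inner_smul_left, real_inner_comm]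
    rw [h1, hvx]
    simp only [mul_sub, Finset.sum_sub_distrib, Finset.mul_sum, sq]
    ring_nf
    have e1 : (∑ j ∈ Ni, α j t * ⟪x i t, B (F (x i t - x j t))⟫) * 2
        = ∑ j ∈ Ni, 2 * α j t * ⟪x i t, B (F (x i t - x j t))⟫ := by
      rw [Finset.sum_mul]; exact Finset.sum_congr rfl fun j _ => by ring
    have e2 : ∑ j ∈ Ni, 2 * α j t * σ * α j t
        = ∑ j ∈ Ni, σ * 2 * α j t * α j t :=
      Finset.sum_congr rfl fun j _ => by ring
    rw [e1]
    have e3 : ∑ j ∈ Ni, α j t * ⟪x i t, B (F (x i t - x j t))⟫ * 2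
        = ∑ j ∈ Ni, 2 * α j t * ⟪x i t, B (F (x i t - x j t))⟫ :=
      Finset.sum_congr rfl fun j _ => by ring
    have e4 : ∑ j ∈ Ni, α j t ^ 2 * σ * 2 = ∑ j ∈ Ni, σ * α j t ^ 2 * 2 :=
      Finset.sum_congr rfl fun j _ => by ring
    rw [e3, e4]
    ring
  refine ⟨?_, ?_⟩
  · have := hnorm.add hsum
    rwa [key] at this
  · have := hdiss (x i t)
    linarith
end

section
/- Fix i ∈ {1,…,N}. Suppose the i-th closed-loop system satisfies x_i'(t) = A_c x_i(t) − Σ_{j ∈ N_i} α_{ij}(t)·(B (F x_{ij}(t))) for all t ≥ 0, and the edge-dependent gains α_{ij} : [0,∞) → ℝ are differentiable and evolve by the unmodified adaptation law α_{ij}'(t) = ⟨x_i(t), B (F x_{ij}(t))⟩ for each j ∈ N_i. Then the Lyapunov functional V_i(t) := ‖x_i(t)‖² + Σ_{j ∈ N_i} α_{ij}(t)² satisfies V_i'(t) ≤ −κ‖x_i(t)‖² for all t ≥ 0; in particular V_i is nonincreasing. -/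
open scoped RealInnerProductSpace

/-- unmodified adaptation law. The Lyapunov functional
`V_i(t) = ‖x_i(t)‖² + Σ_{j ∈ N_i} α_{ij}(t)²` has a derivative bounded by
`−κ‖x_i(t)‖²` at each `t ≥ 0`; in particular it is nonincreasing on `[0,∞)`. -/
theorem stmt1
    {H U : Type*} [NormedAddCommGroup H] [InnerProductSpace ℝ H] [CompleteSpace H]
    [NormedAddCommGroup U] [InnerProductSpace ℝ U] [CompleteSpace U]
    (Ac : H →L[ℝ] H) (B : U →L[ℝ] H) (F : H →L[ℝ] U)
    (κ : ℝ) (hκ : 0 < κ)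
    (hdiss : ∀ φ : H, 2 * ⟪Ac φ, φ⟫ ≤ -κ * ‖φ‖ ^ 2)
    (N : ℕ) (x : Fin N → ℝ → H) (i : Fin N) (Ni : Finset (Fin N))
    (α : Fin N → ℝ → ℝ)
    (hx : ∀ t : ℝ, 0 ≤ t →
      HasDerivAt (x i)
        (Ac (x i t) - ∑ j ∈ Ni, α j t • B (F (x i t - x j t))) t)
    (hα : ∀ j ∈ Ni, ∀ t : ℝ, 0 ≤ t →
      HasDerivAt (α j) (⟪x i t, B (F (x i t - x j t))⟫) t) :
    (∀ t : ℝ, 0 ≤ t →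
      ∃ v : ℝ,
        HasDerivAt (fun s => ‖x i s‖ ^ 2 + ∑ j ∈ Ni, (α j s) ^ 2) v t ∧
        v ≤ -κ * ‖x i t‖ ^ 2) ∧
    AntitoneOn (fun s => ‖x i s‖ ^ 2 + ∑ j ∈ Ni, (α j s) ^ 2) (Set.Ici 0) := by
  have key : ∀ t : ℝ, 0 ≤ t →
      HasDerivAt (fun s => ‖x i s‖ ^ 2 + ∑ j ∈ Ni, (α j s) ^ 2)
        (2 * ⟪Ac (x i t), x i t⟫) t := by
    intro t ht
    have hx' := hx t ht
    have h1 : HasDerivAt (fun s => ‖x i s‖ ^ 2)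
        (⟪Ac (x i t) - ∑ j ∈ Ni, α j t • B (F (x i t - x j t)), x i t⟫ +
         ⟪x i t, Ac (x i t) - ∑ j ∈ Ni, α j t • B (F (x i t - x j t))⟫) t := by
      have := hx'.inner ℝ hx'
      simpa [real_inner_self_eq_norm_sq, add_comm] using this
    have h2 : HasDerivAt (fun s => ∑ j ∈ Ni, (α j s) ^ 2)
        (∑ j ∈ Ni, 2 * α j t * ⟪x i t, B (F (x i t - x j t))⟫) t := by
      apply HasDerivAt.fun_sum
      intro j hj
      have := (hα j hj t ht).fun_pow 2
      simpa [mul_comm, mul_assoc, mul_left_comm] using this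
    have h := h1.add h2
    refine h.congr_deriv ?_
    have e1 : ⟪Ac (x i t) - ∑ j ∈ Ni, α j t • B (F (x i t - x j t)), x i t⟫
        = ⟪Ac (x i t), x i t⟫ - ∑ j ∈ Ni, α j t * ⟪x i t, B (F (x i t - x j t))⟫ := by
      rw [inner_sub_left, sum_inner]
      congr 1
      refine Finset.sum_congr rfl fun j hj => ?_
      rw [real_inner_smul_left, real_inner_comm]
    have e2 : ⟪x i t, Ac (x i t) - ∑ j ∈ Ni, α j t • B (F (x i t - x j t))⟫
        = ⟪Ac (x i t), x i t⟫ - ∑ j ∈ Ni, α j t * ⟪x i t, B (F (x i t - x j t))⟫ := by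
      rw [real_inner_comm]; exact e1
    rw [e1, e2]
    simp only [mul_assoc]
    rw [← Finset.mul_sum]
    ring
  constructor
  · intro t ht
    exact ⟨_, key t ht, hdiss (x i t)⟩
  · apply antitoneOn_of_deriv_nonpos (convex_Ici 0)
    · intro t ht
      exact ((key t ht).continuousAt).continuousWithinAt
    · intro t ht
      rw [interior_Ici] at ht
      exact ((key t ht.le).differentiableAt).differentiableWithinAt
    · intro t ht
      rw [interior_Ici] at ht
      rw [(key t ht.le).deriv]
      calc 2 * ⟪Ac (x i t), x i t⟫ ≤ -κ * ‖x i t‖ ^ 2 := hdiss _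
        _ ≤ 0 := by nlinarith [sq_nonneg ‖x i t‖]
end

section
/- Suppose for every i ∈ {1,…,N} the closed-loop system satisfies x_i'(t) = A_c x_i(t) − Σ_{j ∈ N_i} α_{ij}(t)·(B (F x_{ij}(t))) for all t ≥ 0, with differentiable edge-dependent gains evolving by α_{ij}'(t) = ⟨x_i(t), B (F x_{ij}(t))⟩ − σ α_{ij}(t), σ > 0, for j ∈ N_i. Set V_i(t) := ‖x_i(t)‖² + Σ_{j ∈ N_i} α_{ij}(t)² and c := min{κ, 2σ}. Then Σ_{i=1}^N V_i(t) ≤ e^{−c t} Σ_{i=1}^N V_i(0) for all t ≥ 0; consequently ‖x_i(t)‖ → 0 as t → ∞ for every i, and α_{ij}(t) → 0 as t → ∞ for every i and every j ∈ N_i. -/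
open scoped RealInnerProductSpace
open Filter

/-- with the σ-modified adaptation law for all agents, the total
Lyapunov functional decays exponentially with rate `c = min{κ, 2σ}`; hence all
state norms and all adaptive gains converge to zero as `t → ∞`. -/
theorem stmt2
    {H U : Type*} [NormedAddCommGroup H] [InnerProductSpace ℝ H] [CompleteSpace H]
    [NormedAddCommGroup U] [InnerProductSpace ℝ U] [CompleteSpace U]
    (Ac : H →L[ℝ] H) (B : U →L[ℝ] H) (F : H →L[ℝ] U)
    (κ σ : ℝ) (hκ : 0 < κ) (hσ : 0 < σ)
    (hdiss : ∀ φ : H, 2 * ⟪Ac φ, φ⟫ ≤ -κ * ‖φ‖ ^ 2)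
    (N : ℕ) (x : Fin N → ℝ → H) (Ni : Fin N → Finset (Fin N))
    (α : Fin N → Fin N → ℝ → ℝ)
    (hx : ∀ i, ∀ t : ℝ, 0 ≤ t →
      HasDerivAt (x i)
        (Ac (x i t) - ∑ j ∈ Ni i, α i j t • B (F (x i t - x j t))) t)
    (hα : ∀ i, ∀ j ∈ Ni i, ∀ t : ℝ, 0 ≤ t →
      HasDerivAt (α i j) (⟪x i t, B (F (x i t - x j t))⟫ - σ * α i j t) t) :
    (∀ t : ℝ, 0 ≤ t →
      ∑ i, (‖x i t‖ ^ 2 + ∑ j ∈ Ni i, (α i j t) ^ 2) ≤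
        Real.exp (-(min κ (2 * σ)) * t) *
          ∑ i, (‖x i 0‖ ^ 2 + ∑ j ∈ Ni i, (α i j 0) ^ 2)) ∧
    (∀ i, Tendsto (fun t => ‖x i t‖) atTop (nhds 0)) ∧
    (∀ i, ∀ j ∈ Ni i, Tendsto (α i j) atTop (nhds 0)) := by
  set c := min κ (2 * σ) with hc
  have hc0 : 0 < c := lt_min hκ (by linarith)
  set V : ℝ → ℝ := fun t => ∑ i, (‖x i t‖ ^ 2 + ∑ j ∈ Ni i, (α i j t) ^ 2) with hVdef
  set D : ℝ → ℝ := fun t => ∑ i,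
      (2 * ⟪x i t, Ac (x i t) - ∑ j ∈ Ni i, α i j t • B (F (x i t - x j t))⟫ +
        ∑ j ∈ Ni i, 2 * α i j t ^ 1 * (⟪x i t, B (F (x i t - x j t))⟫ - σ * α i j t))
    with hDdef
  have hVderiv : ∀ t : ℝ, 0 ≤ t → HasDerivAt V (D t) t := by
    intro t ht
    apply HasDerivAt.fun_sum
    intro i _
    exact ((hx i t ht).norm_sq).add
      (HasDerivAt.fun_sum fun j hj => (hα i j hj t ht).pow 2)
  have hVnonneg : ∀ t : ℝ, 0 ≤ V t := by
    intro t; apply Finset.sum_nonneg; intro i _; positivity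
  have hDle : ∀ t : ℝ, 0 ≤ t → D t ≤ -c * V t := by
    intro t ht
    rw [hDdef, hVdef]
    simp only [neg_mul, Finset.mul_sum, ← Finset.sum_neg_distrib]
    apply Finset.sum_le_sum
    intro i _
    have h1 : ⟪x i t, Ac (x i t) - ∑ j ∈ Ni i, α i j t • B (F (x i t - x j t))⟫
        = ⟪x i t, Ac (x i t)⟫ - ∑ j ∈ Ni i, α i j t * ⟪x i t, B (F (x i t - x j t))⟫ := by
      rw [inner_sub_right, inner_sum]
      simp [real_inner_smul_right]
    have h2 : ∑ j ∈ Ni i, 2 * α i j t ^ 1 * (⟪x i t, B (F (x i t - x j t))⟫ - σ * α i j t)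
        = 2 * (∑ j ∈ Ni i, α i j t * ⟪x i t, B (F (x i t - x j t))⟫)
          - 2 * σ * ∑ j ∈ Ni i, (α i j t) ^ 2 := by
      rw [Finset.mul_sum, Finset.mul_sum, ← Finset.sum_sub_distrib]
      apply Finset.sum_congr rfl
      intro j _; ring
    rw [h1, h2]
    have h3 : 2 * ⟪Ac (x i t), x i t⟫ ≤ -κ * ‖x i t‖ ^ 2 := hdiss (x i t)
    rw [real_inner_comm] at h3
    have h4 : (0:ℝ) ≤ ∑ j ∈ Ni i, (α i j t) ^ 2 := by positivity
    have h5 : c ≤ κ := min_le_left _ _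
    have h6 : c ≤ 2 * σ := min_le_right _ _
    have h7 : (0:ℝ) ≤ ‖x i t‖ ^ 2 := by positivity
    nlinarith
  -- exponential decay via antitonicity of g = exp(c t) * V t
  set g : ℝ → ℝ := fun t => Real.exp (c * t) * V t with hgdef
  have hgderiv : ∀ t : ℝ, 0 ≤ t →
      HasDerivAt g (c * Real.exp (c * t) * V t + Real.exp (c * t) * D t) t := by
    intro t ht
    have he : HasDerivAt (fun t => Real.exp (c * t)) (c * Real.exp (c * t)) t := by
      simpa [Function.comp_def, mul_comm] using
        (Real.hasDerivAt_exp (c * t)).comp t ((hasDerivAt_id t).const_mul c)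
    exact he.mul (hVderiv t ht)
  have hganti : AntitoneOn g (Set.Ici (0:ℝ)) := by
    apply antitoneOn_of_deriv_nonpos (convex_Ici 0)
    · intro t ht
      exact (hgderiv t ht).continuousAt.continuousWithinAt
    · rw [interior_Ici]
      intro t ht
      exact (hgderiv t (le_of_lt ht)).differentiableAt.differentiableWithinAt
    · rw [interior_Ici]
      intro t ht
      rw [(hgderiv t (le_of_lt ht)).deriv]
      have h1 := hDle t (le_of_lt ht)
      have h2 : (0:ℝ) < Real.exp (c * t) := Real.exp_pos _
      nlinarith
  have hmain : ∀ t : ℝ, 0 ≤ t → V t ≤ Real.exp (-c * t) * V 0 := by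
    intro t ht
    have h1 : g t ≤ g 0 := hganti (Set.self_mem_Ici) ht ht
    rw [hgdef] at h1
    simp only [mul_zero, Real.exp_zero, one_mul] at h1
    rw [neg_mul, Real.exp_neg]
    have h2 : (0:ℝ) < Real.exp (c * t) := Real.exp_pos _
    calc V t = (Real.exp (c*t))⁻¹ * (Real.exp (c*t) * V t) := by field_simp
    _ ≤ (Real.exp (c*t))⁻¹ * V 0 := by
        apply mul_le_mul_of_nonneg_left h1 (by positivity)
  have hbound : Tendsto (fun t : ℝ => Real.exp (-c * t) * V 0) atTop (nhds 0) := by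
    have h1 : Tendsto (fun t : ℝ => Real.exp (-(c * t))) atTop (nhds 0) :=
      Real.tendsto_exp_neg_atTop_nhds_zero.comp (Tendsto.const_mul_atTop hc0 tendsto_id)
    simpa using h1.mul_const (V 0)
  have hxleV : ∀ i, ∀ t : ℝ, ‖x i t‖ ^ 2 ≤ V t := by
    intro i t
    have h1 := Finset.single_le_sum
      (f := fun k => ‖x k t‖ ^ 2 + ∑ j ∈ Ni k, (α k j t) ^ 2)
      (fun k _ => by positivity) (Finset.mem_univ i)
    have h2 : (0:ℝ) ≤ ∑ j ∈ Ni i, (α i j t) ^ 2 := by positivity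
    have h1' : ‖x i t‖ ^ 2 + ∑ j ∈ Ni i, (α i j t) ^ 2 ≤ V t := h1
    linarith
  have hαleV : ∀ i, ∀ j ∈ Ni i, ∀ t : ℝ, (α i j t) ^ 2 ≤ V t := by
    intro i j hj t
    have h1 := Finset.single_le_sum
      (f := fun k => ‖x k t‖ ^ 2 + ∑ j ∈ Ni k, (α k j t) ^ 2)
      (fun k _ => by positivity) (Finset.mem_univ i)
    have h2 := Finset.single_le_sum
      (f := fun j => (α i j t) ^ 2) (fun j _ => by positivity) hj
    have h3 : (0:ℝ) ≤ ‖x i t‖ ^ 2 := by positivity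
    have h1' : ‖x i t‖ ^ 2 + ∑ j ∈ Ni i, (α i j t) ^ 2 ≤ V t := h1
    have h2' : (α i j t) ^ 2 ≤ ∑ j ∈ Ni i, (α i j t) ^ 2 := h2
    linarith
  have hVlim : Tendsto V atTop (nhds 0) := by
    apply squeeze_zero' (Eventually.of_forall hVnonneg) ?_ hbound
    filter_upwards [eventually_ge_atTop (0:ℝ)] with t ht
    exact hmain t ht
  refine ⟨?_, ?_, ?_⟩
  · intro t ht
    simpa [hVdef, hc] using hmain t ht
  · intro i
    have hsq : Tendsto (fun t => ‖x i t‖ ^ 2) atTop (nhds 0) := by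
      apply squeeze_zero' (Eventually.of_forall fun t => by positivity)
        (Eventually.of_forall fun t => hxleV i t) hVlim
    have := hsq.sqrt
    simpa [Real.sqrt_sq, norm_nonneg] using this
  · intro i j hj
    have hsq : Tendsto (fun t => (α i j t) ^ 2) atTop (nhds 0) := by
      apply squeeze_zero' (Eventually.of_forall fun t => by positivity)
        (Eventually.of_forall fun t => hαleV i j hj t) hVlim
    have h1 := hsq.sqrt
    simp only [Real.sqrt_zero] at h1
    have h2 : ∀ t : ℝ, Real.sqrt ((α i j t) ^ 2) = |α i j t| := fun t =>
      Real.sqrt_sq_eq_abs _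
    rw [show (fun t => Real.sqrt ((α i j t)^2)) = fun t => |α i j t| from funext h2] at h1
    exact tendsto_zero_iff_abs_tendsto_zero (α i j) |>.mpr h1
end

section
/- Suppose the aggregate closed-loop adaptive system satisfies, for every i ∈ {1,…,N} and all t ≥ 0, x_i'(t) = A_c x_i(t) − Σ_{j=1}^N L_{ij}(t)·(B (F x_j(t))), where the entries of the time-varying gain matrix L(t) ∈ ℝ^{N×N} are differentiable and evolve by L_{ij}'(t) = ⟨x_i(t), B (F x_j(t))⟩ − σ L_{ij}(t) with σ > 0. Then the function W(t) := Σ_{i=1}^N ‖x_i(t)‖² + Σ_{i,j=1}^N L_{ij}(t)² is differentiable and satisfies W'(t) = 2 Σ_{i=1}^N ⟨A_c x_i(t), x_i(t)⟩ − 2σ Σ_{i,j=1}^N L_{ij}(t)² ≤ −κ Σ_{i=1}^N ‖x_i(t)‖² − 2σ Σ_{i,j=1}^N L_{ij}(t)² for all t ≥ 0 (the cross terms −⟨B(F x_j), x_i⟩·L_{ij} from the state equation and +⟨x_i, B(F x_j)⟩·L_{ij} from the adaptation cancel exactly). -/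
open scoped RealInnerProductSpace

/-- aggregate adaptive closed loop with time-varying gain matrix
`L(t)`. The function `W(t) = Σ_i ‖x_i(t)‖² + Σ_{i,j} L_{ij}(t)²` is
differentiable with derivative `2 Σ_i ⟨A_c x_i, x_i⟩ − 2σ Σ_{i,j} L_{ij}²`,
bounded above by `−κ Σ_i ‖x_i‖² − 2σ Σ_{i,j} L_{ij}²`. -/
theorem stmt3
    {H U : Type*} [NormedAddCommGroup H] [InnerProductSpace ℝ H] [CompleteSpace H]
    [NormedAddCommGroup U] [InnerProductSpace ℝ U] [CompleteSpace U]
    (Ac : H →L[ℝ] H) (B : U →L[ℝ] H) (F : H →L[ℝ] U)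
    (κ σ : ℝ) (hκ : 0 < κ) (hσ : 0 < σ)
    (hdiss : ∀ φ : H, 2 * ⟪Ac φ, φ⟫ ≤ -κ * ‖φ‖ ^ 2)
    (N : ℕ) (x : Fin N → ℝ → H)
    (L : ℝ → Matrix (Fin N) (Fin N) ℝ)
    (hx : ∀ i, ∀ t : ℝ, 0 ≤ t →
      HasDerivAt (x i)
        (Ac (x i t) - ∑ j, L t i j • B (F (x j t))) t)
    (hL : ∀ i j, ∀ t : ℝ, 0 ≤ t →
      HasDerivAt (fun s => L s i j)
        (⟪x i t, B (F (x j t))⟫ - σ * L t i j) t) :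
    ∀ t : ℝ, 0 ≤ t →
      HasDerivAt
        (fun s => ∑ i, ‖x i s‖ ^ 2 + ∑ i, ∑ j, (L s i j) ^ 2)
        (2 * ∑ i, ⟪Ac (x i t), x i t⟫ - 2 * σ * ∑ i, ∑ j, (L t i j) ^ 2) t ∧
      2 * ∑ i, ⟪Ac (x i t), x i t⟫ - 2 * σ * ∑ i, ∑ j, (L t i j) ^ 2 ≤
        -κ * ∑ i, ‖x i t‖ ^ 2 - 2 * σ * ∑ i, ∑ j, (L t i j) ^ 2 := by
  intro t ht
  constructor
  · have h1 : ∀ i ∈ Finset.univ, HasDerivAt (fun s => ‖x i s‖ ^ 2)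
        (2 * ⟪Ac (x i t), x i t⟫ - ∑ j, 2 * L t i j * ⟪x i t, B (F (x j t))⟫) t := by
      intro i _
      have h := (hx i t ht).inner ℝ (hx i t ht)
      have e : ⟪x i t, Ac (x i t) - ∑ j, L t i j • B (F (x j t))⟫
          + ⟪Ac (x i t) - ∑ j, L t i j • B (F (x j t)), x i t⟫
          = 2 * ⟪Ac (x i t), x i t⟫ - ∑ j, 2 * L t i j * ⟪x i t, B (F (x j t))⟫ := by
        have c1 : ⟪x i t, Ac (x i t)⟫ = ⟪Ac (x i t), x i t⟫ := real_inner_comm _ _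
        have c2 : ∀ j, ⟪B (F (x j t)), x i t⟫ = ⟪x i t, B (F (x j t))⟫ :=
          fun j => real_inner_comm _ _
        simp only [inner_sub_right, inner_sub_left, inner_sum, sum_inner,
          real_inner_smul_right, real_inner_smul_left, c1, c2]
        have hT : ∑ j, 2 * L t i j * ⟪x i t, B (F (x j t))⟫
            = 2 * ∑ j, L t i j * ⟪x i t, B (F (x j t))⟫ := by
          rw [Finset.mul_sum]
          exact Finset.sum_congr rfl fun j _ => by ring
        rw [hT]
        ring
      rw [← e]
      simpa only [real_inner_self_eq_norm_sq] using h
    have h2 : ∀ i ∈ Finset.univ, HasDerivAt (fun s => ∑ j, (L s i j) ^ 2)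
        (∑ j, 2 * L t i j * (⟪x i t, B (F (x j t))⟫ - σ * L t i j)) t := by
      intro i _
      refine HasDerivAt.fun_sum fun j _ => ?_
      have := (hL i j t ht).fun_pow 2
      simpa [mul_comm, mul_assoc, mul_left_comm] using this
    have h := (HasDerivAt.fun_sum h1).add (HasDerivAt.fun_sum h2)
    refine HasDerivAt.congr_deriv h ?_
    have e1 : ∑ i, (2 * ⟪Ac (x i t), x i t⟫ - ∑ j, 2 * L t i j * ⟪x i t, B (F (x j t))⟫)
        = 2 * ∑ i, ⟪Ac (x i t), x i t⟫ - ∑ i, ∑ j, 2 * L t i j * ⟪x i t, B (F (x j t))⟫ := by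
      simp [Finset.sum_sub_distrib, Finset.mul_sum]
    have e2 : ∑ i, ∑ j, 2 * L t i j * (⟪x i t, B (F (x j t))⟫ - σ * L t i j)
        = ∑ i, ∑ j, 2 * L t i j * ⟪x i t, B (F (x j t))⟫
          - 2 * σ * ∑ i, ∑ j, (L t i j) ^ 2 := by
      simp only [mul_sub, Finset.sum_sub_distrib, Finset.mul_sum]
      congr 1
      refine Finset.sum_congr rfl fun i _ => Finset.sum_congr rfl fun j _ => by ring
    rw [e1, e2]
    ring
  · have h2 : 2 * ∑ i, ⟪Ac (x i t), x i t⟫ ≤ -κ * ∑ i, ‖x i t‖ ^ 2 := by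
      rw [Finset.mul_sum, Finset.mul_sum]
      exact Finset.sum_le_sum fun i _ => hdiss (x i t)
    linarith
end

section
/- Suppose the aggregate closed-loop adaptive system satisfies, for every i ∈ {1,…,N} and all t ≥ 0, x_i'(t) = A_c x_i(t) − Σ_{j=1}^N L_{ij}(t)·(B (F x_j(t))), where the entries of L(t) ∈ ℝ^{N×N} are differentiable and evolve by L_{ij}'(t) = ⟨x_i(t), B (F x_j(t))⟩ − σ L_{ij}(t) with σ > 0. Then W(t) := Σ_{i=1}^N ‖x_i(t)‖² + Σ_{i,j=1}^N L_{ij}(t)² is nonincreasing on [0,∞); it satisfies the integral inequality W(t) + κ ∫₀^t Σ_{i=1}^N ‖x_i(τ)‖² dτ + 2σ ∫₀^t Σ_{i,j=1}^N L_{ij}(τ)² dτ ≤ W(0) for all t ≥ 0; and W(t) ≤ e^{−min{κ,2σ} t} W(0), so that lim_{t→∞} W(t) = 0. -/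
open scoped RealInnerProductSpace
open Filter

/-- the aggregate Lyapunov function
`W(t) = Σ_i ‖x_i(t)‖² + Σ_{i,j} L_{ij}(t)²` is nonincreasing on `[0,∞)`,
satisfies the integral inequality
`W(t) + κ ∫₀ᵗ Σ‖x_i‖² + 2σ ∫₀ᵗ Σ L_{ij}² ≤ W(0)`, decays exponentially with
rate `min{κ, 2σ}`, and converges to zero. -/
theorem stmt4
    {H U : Type*} [NormedAddCommGroup H] [InnerProductSpace ℝ H] [CompleteSpace H]
    [NormedAddCommGroup U] [InnerProductSpace ℝ U] [CompleteSpace U]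
    (Ac : H →L[ℝ] H) (B : U →L[ℝ] H) (F : H →L[ℝ] U)
    (κ σ : ℝ) (hκ : 0 < κ) (hσ : 0 < σ)
    (hdiss : ∀ φ : H, 2 * ⟪Ac φ, φ⟫ ≤ -κ * ‖φ‖ ^ 2)
    (N : ℕ) (x : Fin N → ℝ → H)
    (L : ℝ → Matrix (Fin N) (Fin N) ℝ)
    (hx : ∀ i, ∀ t : ℝ, 0 ≤ t →
      HasDerivAt (x i)
        (Ac (x i t) - ∑ j, L t i j • B (F (x j t))) t)
    (hL : ∀ i j, ∀ t : ℝ, 0 ≤ t →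
      HasDerivAt (fun s => L s i j)
        (⟪x i t, B (F (x j t))⟫ - σ * L t i j) t)
    (W : ℝ → ℝ)
    (hW : ∀ t, W t = ∑ i, ‖x i t‖ ^ 2 + ∑ i, ∑ j, (L t i j) ^ 2) :
    AntitoneOn W (Set.Ici 0) ∧
    (∀ t : ℝ, 0 ≤ t →
      W t + κ * (∫ τ in (0:ℝ)..t, ∑ i, ‖x i τ‖ ^ 2)
          + 2 * σ * (∫ τ in (0:ℝ)..t, ∑ i, ∑ j, (L τ i j) ^ 2) ≤ W 0) ∧
    (∀ t : ℝ, 0 ≤ t → W t ≤ Real.exp (-(min κ (2 * σ)) * t) * W 0) ∧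
    Tendsto W atTop (nhds 0) := by
  set m := min κ (2 * σ) with hm
  have hm0 : 0 < m := lt_min hκ (by positivity)
  have hmκ : m ≤ κ := min_le_left _ _
  have hmσ : m ≤ 2 * σ := min_le_right _ _
  set A : ℝ → ℝ := fun t => ∑ i, ‖x i t‖ ^ 2 with hA
  set Q : ℝ → ℝ := fun t => ∑ i, ∑ j, (L t i j) ^ 2 with hQ
  set D : ℝ → ℝ := fun t => (∑ i, 2 * ⟪Ac (x i t), x i t⟫) - 2 * σ * Q t with hDdef
  have hA0 : ∀ t, 0 ≤ A t := fun t => Finset.sum_nonneg fun i _ => by positivity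
  have hQ0 : ∀ t, 0 ≤ Q t :=
    fun t => Finset.sum_nonneg fun i _ => Finset.sum_nonneg fun j _ => by positivity
  have hWAQ : ∀ t, W t = A t + Q t := fun t => hW t
  have hW0 : ∀ t, 0 ≤ W t := fun t => by rw [hWAQ]; exact add_nonneg (hA0 t) (hQ0 t)
  -- rewrite W using inner products
  have hWeq : W = fun s => ∑ i, (⟪x i s, x i s⟫ + ∑ j, (L s i j) ^ 2) := by
    funext s
    rw [hW s, Finset.sum_add_distrib]
    simp [real_inner_self_eq_norm_sq]
  -- the derivative of W
  have hWD : ∀ t : ℝ, 0 ≤ t → HasDerivAt W (D t) t := by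
    intro t ht
    have hper : ∀ i : Fin N, HasDerivAt (fun s => ⟪x i s, x i s⟫ + ∑ j, (L s i j) ^ 2)
        ((2 * ⟪Ac (x i t), x i t⟫ - ∑ j, 2 * (L t i j * ⟪B (F (x j t)), x i t⟫))
          + ∑ j, (2 * (L t i j * ⟪B (F (x j t)), x i t⟫) - 2 * σ * (L t i j) ^ 2)) t := by
      intro i
      have h1 := (hx i t ht).inner ℝ (hx i t ht)
      have h1' : HasDerivAt (fun s => ⟪x i s, x i s⟫)
          (2 * ⟪Ac (x i t), x i t⟫ - ∑ j, 2 * (L t i j * ⟪B (F (x j t)), x i t⟫)) t := by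
        refine h1.congr_deriv (Eq.symm ?_)
        rw [inner_sub_left, inner_sub_right, sum_inner, inner_sum]
        simp only [real_inner_smul_left, real_inner_smul_right]
        rw [real_inner_comm (x i t) (Ac (x i t))]
        have : ∀ j : Fin N, L t i j * ⟪x i t, B (F (x j t))⟫
            = L t i j * ⟪B (F (x j t)), x i t⟫ := fun j => by rw [real_inner_comm]
        rw [Finset.sum_congr rfl fun j _ => this j, ← Finset.mul_sum]
        ring
      have h2 : HasDerivAt (fun s => ∑ j, (L s i j) ^ 2)
          (∑ j, (2 * (L t i j * ⟪B (F (x j t)), x i t⟫) - 2 * σ * (L t i j) ^ 2)) t := by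
        refine HasDerivAt.fun_sum fun j _ => ?_
        have := (hL i j t ht).pow 2
        refine this.congr_deriv (Eq.symm ?_)
        rw [real_inner_comm (B (F (x j t))) (x i t)]
        push_cast
        ring
      exact h1'.add h2
    have hsum := HasDerivAt.fun_sum (fun i (_ : i ∈ Finset.univ) => hper i)
    rw [← hWeq] at hsum
    refine hsum.congr_deriv (Eq.symm ?_)
    have : ∀ i : Fin N,
        ((2 * ⟪Ac (x i t), x i t⟫ - ∑ j, 2 * (L t i j * ⟪B (F (x j t)), x i t⟫))
          + ∑ j, (2 * (L t i j * ⟪B (F (x j t)), x i t⟫) - 2 * σ * (L t i j) ^ 2))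
        = 2 * ⟪Ac (x i t), x i t⟫ - ∑ j, 2 * σ * (L t i j) ^ 2 := by
      intro i
      rw [Finset.sum_sub_distrib]
      ring
    rw [Finset.sum_congr rfl fun i _ => this i, Finset.sum_sub_distrib]
    simp only [hDdef, hQ, Finset.mul_sum]
  -- bound on the derivative
  have hDb : ∀ t : ℝ, D t ≤ -κ * A t - 2 * σ * Q t := by
    intro t
    have h : (∑ i, 2 * ⟪Ac (x i t), x i t⟫) ≤ ∑ i, -κ * ‖x i t‖ ^ 2 :=
      Finset.sum_le_sum fun i _ => hdiss (x i t)
    have h2 : (∑ i, -κ * ‖x i t‖ ^ 2) = -κ * A t := by rw [hA, Finset.mul_sum]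
    simp only [hDdef]
    linarith [h, h2.le, h2.ge]
  have hDW : ∀ t : ℝ, D t ≤ -m * W t := by
    intro t
    have := hDb t
    have hw := hWAQ t
    nlinarith [hA0 t, hQ0 t]
  have hD0 : ∀ t : ℝ, D t ≤ 0 := fun t => (hDW t).trans (by nlinarith [hW0 t])
  -- continuity facts
  have hxC : ∀ i, ContinuousOn (x i) (Set.Ici 0) :=
    fun i t ht => ((hx i t ht).continuousAt).continuousWithinAt
  have hLC : ∀ i j, ContinuousOn (fun s => L s i j) (Set.Ici 0) :=
    fun i j t ht => ((hL i j t ht).continuousAt).continuousWithinAt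
  have hAC : ContinuousOn A (Set.Ici 0) := by
    refine continuousOn_finset_sum _ fun i _ => ?_
    exact ((hxC i).norm).pow 2
  have hQC : ContinuousOn Q (Set.Ici 0) := by
    refine continuousOn_finset_sum _ fun i _ => continuousOn_finset_sum _ fun j _ => ?_
    exact (hLC i j).pow 2
  have hWC : ContinuousOn W (Set.Ici 0) := by
    have : W = fun t => A t + Q t := funext hWAQ
    rw [this]; exact hAC.add hQC
  -- antitone
  have hAnti : AntitoneOn W (Set.Ici 0) := by
    refine antitoneOn_of_deriv_nonpos (convex_Ici 0) hWC ?_ ?_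
    · intro t ht
      rw [interior_Ici] at ht
      exact (hWD t ht.le).differentiableAt.differentiableWithinAt
    · intro t ht
      rw [interior_Ici] at ht
      rw [(hWD t ht.le).deriv]
      exact hD0 t
  refine ⟨hAnti, ?_, ?_, ?_⟩
  · -- integral inequality
    intro t ht
    have hsub : Set.uIcc (0:ℝ) t ⊆ Set.Ici 0 := by
      rw [Set.uIcc_of_le ht]; exact Set.Icc_subset_Ici_self
    have hDint : IntervalIntegrable D MeasureTheory.volume 0 t := by
      refine ContinuousOn.intervalIntegrable ?_
      refine ContinuousOn.sub (continuousOn_finset_sum _ fun i _ => ?_)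
        ((continuousOn_const.mul (hQC.mono hsub)))
      exact continuousOn_const.mul
        (ContinuousOn.inner ((Ac.continuous.comp_continuousOn ((hxC i).mono hsub)))
          ((hxC i).mono hsub))
    have hAint : IntervalIntegrable A MeasureTheory.volume 0 t :=
      (hAC.mono hsub).intervalIntegrable
    have hQint : IntervalIntegrable Q MeasureTheory.volume 0 t :=
      (hQC.mono hsub).intervalIntegrable
    have ftc : ∫ τ in (0:ℝ)..t, D τ = W t - W 0 := by
      refine intervalIntegral.integral_eq_sub_of_hasDerivAt (fun τ hτ => hWD τ ?_) hDint
      exact (hsub hτ)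
    have hmono : (∫ τ in (0:ℝ)..t, D τ)
        ≤ ∫ τ in (0:ℝ)..t, (-κ * A τ - 2 * σ * Q τ) := by
      refine intervalIntegral.integral_mono_on ht hDint
        (((hAint.const_mul (-κ)).sub (hQint.const_mul (2 * σ)))) (fun τ _ => hDb τ)
    have hrw : (∫ τ in (0:ℝ)..t, (-κ * A τ - 2 * σ * Q τ))
        = -κ * (∫ τ in (0:ℝ)..t, A τ) - 2 * σ * (∫ τ in (0:ℝ)..t, Q τ) := by
      rw [intervalIntegral.integral_sub (hAint.const_mul (-κ)) (hQint.const_mul (2 * σ)),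
        intervalIntegral.integral_const_mul, intervalIntegral.integral_const_mul]
    have hIA : (∫ τ in (0:ℝ)..t, ∑ i, ‖x i τ‖ ^ 2) = ∫ τ in (0:ℝ)..t, A τ := rfl
    have hIQ : (∫ τ in (0:ℝ)..t, ∑ i, ∑ j, (L τ i j) ^ 2) = ∫ τ in (0:ℝ)..t, Q τ := rfl
    rw [hIA, hIQ]
    linarith [ftc, hmono, hrw.le, hrw.ge]
  · -- exponential decay
    intro t ht
    set φ : ℝ → ℝ := fun s => Real.exp (m * s) * W s with hφ
    have hφd : ∀ s : ℝ, 0 ≤ s →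
        HasDerivAt φ (Real.exp (m * s) * (m * W s + D s)) s := by
      intro s hs
      have he : HasDerivAt (fun r => Real.exp (m * r)) (Real.exp (m * s) * m) s := by
        simpa using ((hasDerivAt_id s).const_mul m).exp
      have := he.mul (hWD s hs)
      refine this.congr_deriv (Eq.symm ?_)
      ring
    have hφC : ContinuousOn φ (Set.Ici 0) :=
      ((Real.continuous_exp.comp (continuous_const.mul continuous_id)).continuousOn).mul hWC
    have hφAnti : AntitoneOn φ (Set.Ici 0) := by
      refine antitoneOn_of_deriv_nonpos (convex_Ici 0) hφC ?_ ?_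
      · intro s hs
        rw [interior_Ici] at hs
        exact (hφd s hs.le).differentiableAt.differentiableWithinAt
      · intro s hs
        rw [interior_Ici] at hs
        rw [(hφd s hs.le).deriv]
        have h1 := hDW s
        have : m * W s + D s ≤ 0 := by linarith
        exact mul_nonpos_of_nonneg_of_nonpos (Real.exp_nonneg _) this
    have hle : φ t ≤ φ 0 := hφAnti (Set.self_mem_Ici) ht ht
    have hφ0 : φ 0 = W 0 := by simp [hφ]
    have hkey : Real.exp (m * t) * W t ≤ W 0 := by rw [← hφ0]; exact hle
    have hpos : (0:ℝ) < Real.exp (m * t) := Real.exp_pos _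
    rw [neg_mul, Real.exp_neg]
    have h2 : (Real.exp (m*t))⁻¹ * (Real.exp (m*t) * W t) ≤ (Real.exp (m*t))⁻¹ * W 0 :=
      mul_le_mul_of_nonneg_left hkey (by positivity)
    rwa [← mul_assoc, inv_mul_cancel₀ (ne_of_gt hpos), one_mul] at h2
  · -- convergence to zero
    have hupper : Tendsto (fun t => Real.exp (-(m * t)) * W 0) atTop (nhds 0) := by
      have h1 : Tendsto (fun t : ℝ => m * t) atTop atTop :=
        Tendsto.const_mul_atTop hm0 tendsto_id
      have h2 : Tendsto (fun t : ℝ => Real.exp (-(m * t))) atTop (nhds 0) :=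
        Real.tendsto_exp_neg_atTop_nhds_zero.comp h1
      simpa using h2.mul_const (W 0)
    refine tendsto_of_tendsto_of_tendsto_of_le_of_le' tendsto_const_nhds hupper ?_ ?_
    · exact Eventually.of_forall fun t => hW0 t
    · filter_upwards [eventually_ge_atTop (0:ℝ)] with t ht
      set φ : ℝ → ℝ := fun s => Real.exp (m * s) * W s with hφ
      have hφd : ∀ s : ℝ, 0 ≤ s →
          HasDerivAt φ (Real.exp (m * s) * (m * W s + D s)) s := by
        intro s hs
        have he : HasDerivAt (fun r => Real.exp (m * r)) (Real.exp (m * s) * m) s := by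
          simpa using ((hasDerivAt_id s).const_mul m).exp
        have := he.mul (hWD s hs)
        refine this.congr_deriv (Eq.symm ?_)
        ring
      have hφC : ContinuousOn φ (Set.Ici 0) :=
        ((Real.continuous_exp.comp (continuous_const.mul continuous_id)).continuousOn).mul hWC
      have hφAnti : AntitoneOn φ (Set.Ici 0) := by
        refine antitoneOn_of_deriv_nonpos (convex_Ici 0) hφC ?_ ?_
        · intro s hs
          rw [interior_Ici] at hs
          exact (hφd s hs.le).differentiableAt.differentiableWithinAt
        · intro s hs
          rw [interior_Ici] at hs
          rw [(hφd s hs.le).deriv]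
          have h1 := hDW s
          have : m * W s + D s ≤ 0 := by linarith
          exact mul_nonpos_of_nonneg_of_nonpos (Real.exp_nonneg _) this
      have hle : φ t ≤ φ 0 := hφAnti (Set.self_mem_Ici) ht ht
      have hφ0 : φ 0 = W 0 := by simp [hφ]
      have hkey : Real.exp (m * t) * W t ≤ W 0 := by rw [← hφ0]; exact hle
      have hpos : (0:ℝ) < Real.exp (m * t) := Real.exp_pos _
      rw [Real.exp_neg]
      have h2 : (Real.exp (m*t))⁻¹ * (Real.exp (m*t) * W t) ≤ (Real.exp (m*t))⁻¹ * W 0 :=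
        mul_le_mul_of_nonneg_left hkey (by positivity)
      rwa [← mul_assoc, inv_mul_cancel₀ (ne_of_gt hpos), one_mul] at h2
end
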